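/- Let X ∈ R^{s×r} with XᵀX = I, U ∈ R^{s×r} with UᵀU = I, Σ an r×r diagonal matrix with nonnegative entries, and let D̃ be an orthogonal r×r matrix maximizing ⟨D, XᵀUΣ²⟩ over all orthogonal D. Then ‖XᵀUΣ‖_F² ≤ ⟨D̃, XᵀUΣ²⟩. -/

import Mathlib

open Matrix

/-- Squared Frobenius norm of a matrix. -/
def frobSq {a b : ℕ} (M : Matrix (Fin a) (Fin b) ℝ) : ℝ := ∑ i, ∑ j, (M i j) ^ 2

/-- Trace (Frobenius) inner product of matrices. -/
def innerM {a b : ℕ} (M N : Matrix (Fin a) (Fin b) ℝ) : ℝ := ∑ i, ∑ j, M i j * N i j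

section Stmt6Aux

lemma innerM_eq_trace {a b : ℕ} (M N : Matrix (Fin a) (Fin b) ℝ) :
    innerM M N = Matrix.trace (Mᵀ * N) := by
  simp only [innerM, Matrix.trace, Matrix.diag, Matrix.mul_apply, Matrix.transpose_apply]
  rw [Finset.sum_comm]

lemma dot_sq_le {n : ℕ} (x y : Fin n → ℝ) : (x ⬝ᵥ y)^2 ≤ (x ⬝ᵥ x) * (y ⬝ᵥ y) := by
  have := Finset.sum_mul_sq_le_sq_mul_sq Finset.univ x y
  simpa [dotProduct, sq] using this

lemma conj_diag_eq_dot {r : ℕ} (N P : Matrix (Fin r) (Fin r) ℝ) (i : Fin r) :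
    (Pᵀ * N * P) i i = (fun k => P k i) ⬝ᵥ (N *ᵥ fun k => P k i) := by
  simp only [Matrix.mul_apply, Matrix.mulVec, dotProduct, Finset.sum_mul, Finset.mul_sum,
    Matrix.transpose_apply]
  rw [Finset.sum_comm]
  exact Finset.sum_congr rfl fun k _ => Finset.sum_congr rfl fun l _ => by ring

lemma dot_mulVec_self {n m : ℕ} (Y : Matrix (Fin n) (Fin m) ℝ) (v : Fin m → ℝ) :
    (Y *ᵥ v) ⬝ᵥ (Y *ᵥ v) = v ⬝ᵥ ((Yᵀ * Y) *ᵥ v) := by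
  symm
  rw [← mulVec_mulVec, dotProduct_mulVec, vecMul_transpose]

lemma trace_sbm_mul {r : ℕ} (i j : Fin r) (c : ℝ) (B : Matrix (Fin r) (Fin r) ℝ) :
    Matrix.trace (Matrix.single i j c * B) = c * B j i := by
  classical
  unfold Matrix.trace
  rw [show (∑ k, (Matrix.single i j c * B).diag k) = ∑ k, if k = i then c * B j i else 0 from
    Finset.sum_congr rfl fun k _ => by
      rcases eq_or_ne k i with rfl | hk
      · simp [Matrix.diag]
      · simp [Matrix.diag, hk, Matrix.single_mul_apply_of_ne, hk]]
  simp

lemma trace_mul_diagonal' {r : ℕ} (C : Matrix (Fin r) (Fin r) ℝ) (l : Fin r → ℝ) :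
    Matrix.trace (C * Matrix.diagonal l) = ∑ i, C i i * l i := by
  simp [Matrix.trace, Matrix.diag, Matrix.mul_diagonal]

lemma givens_orth {r : ℕ} (H K : Matrix (Fin r) (Fin r) ℝ) (hHt : Hᵀ = H) (hKt : Kᵀ = -K)
    (hHH : H*H = H) (hHK : H*K = K) (hKH : K*H = K) (hKK : K*K = -H)
    (c s' : ℝ) (hcs : c^2 + s'^2 = 1) :
    (1 + (c-1) • H + s' • K)ᵀ * (1 + (c-1) • H + s' • K) = 1 := by
  rw [transpose_add, transpose_add, transpose_one, transpose_smul, transpose_smul, hHt, hKt]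
  simp only [mul_add, add_mul, one_mul, mul_one, Matrix.smul_mul, Matrix.mul_smul,
    neg_mul, mul_neg, smul_neg, neg_neg, neg_smul, smul_smul, smul_add, smul_sub,
    hHH, hHK, hKH, hKK]
  match_scalars
  · ring
  · nlinarith [hcs]
  · ring

lemma sbm_HH {r : ℕ} (i j : Fin r) (hij : i ≠ j) :
    (Matrix.single i i (1:ℝ) + Matrix.single j j 1) * (Matrix.single i i (1:ℝ) + Matrix.single j j 1) = Matrix.single i i (1:ℝ) + Matrix.single j j 1 := by
  simp [mul_add, add_mul, Matrix.single_mul_single_same, Matrix.single_mul_single_of_ne, hij, hij.symm]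

lemma sbm_HK {r : ℕ} (i j : Fin r) (hij : i ≠ j) :
    (Matrix.single i i (1:ℝ) + Matrix.single j j 1) * (Matrix.single i j (1:ℝ) - Matrix.single j i 1) = Matrix.single i j (1:ℝ) - Matrix.single j i 1 := by
  simp [mul_sub, add_mul, Matrix.single_mul_single_same, Matrix.single_mul_single_of_ne, hij, hij.symm]

lemma sbm_KH {r : ℕ} (i j : Fin r) (hij : i ≠ j) :
    (Matrix.single i j (1:ℝ) - Matrix.single j i 1) * (Matrix.single i i (1:ℝ) + Matrix.single j j 1) = Matrix.single i j (1:ℝ) - Matrix.single j i 1 := by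
  simp [mul_add, sub_mul, Matrix.single_mul_single_same, Matrix.single_mul_single_of_ne, hij, hij.symm]
  abel

lemma sbm_KK {r : ℕ} (i j : Fin r) (hij : i ≠ j) :
    (Matrix.single i j (1:ℝ) - Matrix.single j i 1) * (Matrix.single i j (1:ℝ) - Matrix.single j i 1) = -(Matrix.single i i (1:ℝ) + Matrix.single j j 1) := by
  simp [mul_sub, sub_mul, Matrix.single_mul_single_same, Matrix.single_mul_single_of_ne, hij, hij.symm]
  abel

lemma sbm_Ht {r : ℕ} (i j : Fin r) :
    (Matrix.single i i (1:ℝ) + Matrix.single j j 1)ᵀ = Matrix.single i i (1:ℝ) + Matrix.single j j 1 := by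
  ext a b
  simp [Matrix.transpose_apply, Matrix.single, and_comm]

lemma sbm_Kt {r : ℕ} (i j : Fin r) (hij : i ≠ j) :
    (Matrix.single i j (1:ℝ) - Matrix.single j i 1)ᵀ = -(Matrix.single i j (1:ℝ) - Matrix.single j i 1) := by
  ext a b
  simp only [Matrix.transpose_apply, Matrix.sub_apply, Matrix.neg_apply, Matrix.single,
    Matrix.of_apply]
  by_cases h1 : i = b <;> by_cases h2 : j = a <;> by_cases h3 : j = b <;> by_cases h4 : i = a <;>
    simp_all

end Stmt6Aux

set_option maxHeartbeats 2000000 in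
/-- Let `X, U ∈ ℝ^{s×r}` have orthonormal columns, `Σ = diag d` with `d ≥ 0`, and let
`D̃` be an orthogonal matrix maximizing `⟨D, Xᵀ U Σ²⟩` over all orthogonal `D`.
Then `‖Xᵀ U Σ‖_F² ≤ ⟨D̃, Xᵀ U Σ²⟩`. -/
theorem stmt_6 {s r : ℕ} (X U : Matrix (Fin s) (Fin r) ℝ)
    (hX : Xᵀ * X = 1) (hU : Uᵀ * U = 1)
    (d : Fin r → ℝ) (hd : ∀ i, 0 ≤ d i)
    (D : Matrix (Fin r) (Fin r) ℝ) (hD : Dᵀ * D = 1)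
    (hDmax : ∀ D' : Matrix (Fin r) (Fin r) ℝ, D'ᵀ * D' = 1 →
      innerM D' (Xᵀ * U * (Matrix.diagonal d * Matrix.diagonal d)) ≤
        innerM D (Xᵀ * U * (Matrix.diagonal d * Matrix.diagonal d))) :
    frobSq (Xᵀ * U * Matrix.diagonal d) ≤
      innerM D (Xᵀ * U * (Matrix.diagonal d * Matrix.diagonal d)) := by
  classical
  have hDD : D * Dᵀ = 1 := mul_eq_one_comm.mp hD
  set M : Matrix (Fin r) (Fin r) ℝ := Xᵀ * U with hMdef
  set A : Matrix (Fin r) (Fin r) ℝ := M * (Matrix.diagonal d * Matrix.diagonal d) with hAdef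
  set B : Matrix (Fin r) (Fin r) ℝ := Dᵀ * A with hBdef
  have hDA : innerM D A = Matrix.trace B := by rw [innerM_eq_trace, ← hBdef]
  have hcomp : ∀ D' : Matrix (Fin r) (Fin r) ℝ, D'ᵀ * D' = 1 →
      Matrix.trace (D'ᵀ * A) ≤ Matrix.trace B := by
    intro D' h
    have := hDmax D' h
    rwa [innerM_eq_trace, hDA] at this
  -- step 1 : frobSq = innerM M A
  have step1 : frobSq (M * Matrix.diagonal d) = innerM M A := by
    simp only [frobSq, innerM, hAdef, Matrix.diagonal_mul_diagonal, Matrix.mul_diagonal,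
      Pi.mul_apply]
    exact Finset.sum_congr rfl fun i _ => Finset.sum_congr rfl fun j _ => by ring
  -- symmetry of B
  have hsym : ∀ i j : Fin r, i ≠ j → B i j = B j i := by
    intro i j hij
    set H : Matrix (Fin r) (Fin r) ℝ := Matrix.single i i (1:ℝ) + Matrix.single j j 1 with hH
    set K : Matrix (Fin r) (Fin r) ℝ := Matrix.single i j (1:ℝ) - Matrix.single j i 1 with hK
    have key : ∀ c s' : ℝ, c^2 + s'^2 = 1 →
        (c - 1) * (B i i + B j j) + s' * (B i j - B j i) ≤ 0 := by
      intro c s' hcs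
      set R := (1 : Matrix (Fin r) (Fin r) ℝ) + (c-1) • H + s' • K with hR
      have hRo : Rᵀ * R = 1 := givens_orth H K (sbm_Ht i j) (sbm_Kt i j hij)
        (sbm_HH i j hij) (sbm_HK i j hij) (sbm_KH i j hij) (sbm_KK i j hij) c s' hcs
      have hDRo : (D * R)ᵀ * (D * R) = 1 := by
        rw [transpose_mul, mul_assoc, ← mul_assoc Dᵀ D R, hD, one_mul, hRo]
      have h1 := hcomp (D * R) hDRo
      have hRt : Rᵀ = 1 + (c-1) • H - s' • K := by
        rw [hR, transpose_add, transpose_add, transpose_one, transpose_smul, transpose_smul,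
          sbm_Ht i j, sbm_Kt i j hij, smul_neg, ← sub_eq_add_neg]
      have h2 : Matrix.trace ((D * R)ᵀ * A) =
          Matrix.trace B + ((c - 1) * (B i i + B j j) + s' * (B i j - B j i)) := by
        rw [transpose_mul, mul_assoc, ← hBdef, hRt]
        simp only [hH, hK, add_mul, sub_mul, one_mul, Matrix.smul_mul, trace_add, trace_sub,
          trace_smul, trace_sbm_mul, smul_eq_mul]
        ring
      rw [h2] at h1
      linarith
  -- extract B i j = B j i
    by_contra hne
    have hbne : B i j - B j i ≠ 0 := sub_ne_zero_of_ne hne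
    set a := B i i + B j j with hadef
    set b := B i j - B j i with hbdef2
    have hpos : 0 < a^2 + b^2 := by positivity
    set n := Real.sqrt (a^2 + b^2) with hn
    have hnpos : 0 < n := Real.sqrt_pos.mpr hpos
    have hn2 : n^2 = a^2 + b^2 := Real.sq_sqrt hpos.le
    have hcs : (a/n)^2 + (b/n)^2 = 1 := by
      field_simp
      linarith [hn2]
    have h := key (a/n) (b/n) hcs
    have h' : a^2 + b^2 ≤ a * n := by
      have h2 := mul_le_mul_of_nonneg_right h hnpos.le
      have hne' : n ≠ 0 := hnpos.ne'
      field_simp at h2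
      nlinarith [h2]
    have hb2 : b^2 ≤ 0 := by nlinarith [h', hn2, sq_nonneg (a - n)]
    have : b = 0 := by nlinarith [sq_nonneg b]
    exact hbne this
  have hBsym : B.IsHermitian := by
    rw [Matrix.IsHermitian]
    ext i j
    rw [Matrix.conjTranspose_apply]
    simp only [star_trivial]
    rcases eq_or_ne j i with rfl | hij
    · rfl
    · exact hsym j i hij
  -- spectral decomposition
  set P : Matrix (Fin r) (Fin r) ℝ := (hBsym.eigenvectorUnitary : Matrix (Fin r) (Fin r) ℝ)
    with hPdef
  set lam : Fin r → ℝ := hBsym.eigenvalues with hlam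
  have hstarP : star P = Pᵀ := by
    ext a b
    simp [Matrix.star_eq_conjTranspose, Matrix.conjTranspose_apply]
  have hspec : B = P * Matrix.diagonal lam * Pᵀ := by
    have := hBsym.spectral_theorem
    rw [Unitary.conjStarAlgAut_apply, ← hPdef, hstarP] at this
    simpa [RCLike.ofReal_real_eq_id] using this
  have hPP : Pᵀ * P = 1 := by
    rw [← hstarP]
    exact Matrix.UnitaryGroup.star_mul_self hBsym.eigenvectorUnitary
  have hPPt : P * Pᵀ = 1 := mul_eq_one_comm.mp hPP
  have hPBP : Pᵀ * B * P = Matrix.diagonal lam := by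
    rw [hspec, mul_assoc, mul_assoc, hPP, mul_one, ← mul_assoc, hPP, one_mul]
  -- sign matrix
  clear_value P lam
  set sg : Fin r → ℝ := fun i => if 0 ≤ lam i then 1 else -1 with hsg
  have hsgsq : (fun k => sg k * sg k) = fun _ => (1:ℝ) := by
    funext k
    by_cases h : 0 ≤ lam k <;> simp [hsg, h]
  set Q := P * Matrix.diagonal sg * Pᵀ with hQ
  have hQt : Qᵀ = Q := by
    rw [hQ, transpose_mul, transpose_mul, transpose_transpose, diagonal_transpose, mul_assoc]
  have hQo : Qᵀ * Q = 1 := by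
    rw [hQt, hQ]
    calc P * Matrix.diagonal sg * Pᵀ * (P * Matrix.diagonal sg * Pᵀ)
        = P * Matrix.diagonal sg * (Pᵀ * P) * (Matrix.diagonal sg * Pᵀ) := by
          simp only [mul_assoc]
      _ = P * (Matrix.diagonal sg * Matrix.diagonal sg) * Pᵀ := by
          rw [hPP, mul_one, mul_assoc, mul_assoc, mul_assoc]
      _ = 1 := by
          rw [diagonal_mul_diagonal, hsgsq]
          have : Matrix.diagonal (fun _ => (1:ℝ)) = (1 : Matrix (Fin r) (Fin r) ℝ) := by
            rw [← diagonal_one]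
          rw [this, mul_one, hPPt]
  have hDQo : (D * Q)ᵀ * (D * Q) = 1 := by
    rw [transpose_mul, mul_assoc, ← mul_assoc Dᵀ D Q, hD, one_mul, hQo]
  have h3 := hcomp (D * Q) hDQo
  have h4 : Matrix.trace ((D * Q)ᵀ * A) = ∑ i, |lam i| := by
    rw [transpose_mul, mul_assoc, ← hBdef, hQt, hQ]
    have : P * Matrix.diagonal sg * Pᵀ * B = (P * Matrix.diagonal sg) * (Pᵀ * B) := by
      rw [mul_assoc]
    rw [this, Matrix.trace_mul_comm]
    rw [(mul_assoc (Pᵀ * B) P (Matrix.diagonal sg)).symm, hPBP, diagonal_mul_diagonal,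
      Matrix.trace_diagonal]
    refine Finset.sum_congr rfl fun k _ => ?_
    by_cases h : 0 ≤ lam k
    · simp [hsg, h, abs_of_nonneg h, Pi.mul_apply]
    · push_neg at h
      simp [hsg, not_le.mpr h, abs_of_neg h, Pi.mul_apply]
  -- final chain
  have hADB : A = D * B := by rw [hBdef, ← mul_assoc, hDD, one_mul]
  have h5 : innerM M A = ∑ i, (Pᵀ * (Mᵀ * D) * P) i i * lam i := by
    rw [innerM_eq_trace, hADB, hspec]
    have e1 : Mᵀ * (D * (P * Matrix.diagonal lam * Pᵀ)) =
        (Mᵀ * D * P * Matrix.diagonal lam) * Pᵀ := by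
      simp only [mul_assoc]
    rw [e1, Matrix.trace_mul_comm]
    have e2 : Pᵀ * (Mᵀ * D * P * Matrix.diagonal lam) =
        (Pᵀ * (Mᵀ * D) * P) * Matrix.diagonal lam := by
      simp only [mul_assoc]
    rw [e2, trace_mul_diagonal']
  have hbound : ∀ i : Fin r, (Pᵀ * (Mᵀ * D) * P) i i * lam i ≤ |lam i| := by
    intro i
    set p : Fin r → ℝ := fun k => P k i with hp
    have hentry : (Pᵀ * (Mᵀ * D) * P) i i = (M *ᵥ p) ⬝ᵥ (D *ᵥ p) := by
      rw [conj_diag_eq_dot, ← mulVec_mulVec, dotProduct_mulVec, vecMul_transpose]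
    have hpp : p ⬝ᵥ p = 1 := by
      have : (Pᵀ * P) i i = p ⬝ᵥ p := by
        simp [Matrix.mul_apply, dotProduct, Matrix.transpose_apply, hp]
      rw [← this, hPP, Matrix.one_apply_eq]
    have hDp : (D *ᵥ p) ⬝ᵥ (D *ᵥ p) = 1 := by
      rw [dot_mulVec_self, hD, one_mulVec, hpp]
    -- bound on M
    have hMv : M *ᵥ p = Xᵀ *ᵥ (U *ᵥ p) := by rw [hMdef, ← mulVec_mulVec]
    set w : Fin s → ℝ := U *ᵥ p with hw
    have hww : w ⬝ᵥ w = 1 := by rw [hw, dot_mulVec_self, hU, one_mulVec, hpp]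
    set q : Fin s → ℝ := (X * Xᵀ) *ᵥ w with hq
    have ht : (M *ᵥ p) ⬝ᵥ (M *ᵥ p) = w ⬝ᵥ q := by
      rw [hMv, dot_mulVec_self, transpose_transpose, hq]
    have htnn : 0 ≤ w ⬝ᵥ q := by
      rw [← ht]
      exact Finset.sum_nonneg fun k _ => mul_self_nonneg _
    have hGG : (X * Xᵀ)ᵀ * (X * Xᵀ) = X * Xᵀ := by
      rw [transpose_mul, transpose_transpose]
      have e : X * Xᵀ * (X * Xᵀ) = X * (Xᵀ * X) * Xᵀ := by
        simp only [Matrix.mul_assoc]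
      rw [e, hX, Matrix.mul_one]
    have hqq : q ⬝ᵥ q = w ⬝ᵥ q := by
      rw [hq, dot_mulVec_self, hGG]
    have hcs := dot_sq_le w q
    rw [hww, hqq, one_mul] at hcs
    have hgen : ∀ t : ℝ, 0 ≤ t → t^2 ≤ t → t ≤ 1 := by
      intro t h0 h2
      nlinarith
    have hMp : (M *ᵥ p) ⬝ᵥ (M *ᵥ p) ≤ 1 := by
      rw [ht]
      exact hgen _ htnn hcs
    have hcs2 := dot_sq_le (M *ᵥ p) (D *ᵥ p)
    rw [hDp, mul_one] at hcs2
    have hgen2 : ∀ x : ℝ, x^2 ≤ 1 → |x| ≤ 1 := by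
      intro x hx
      rw [abs_le]
      constructor <;> nlinarith
    have habs : |(M *ᵥ p) ⬝ᵥ (D *ᵥ p)| ≤ 1 := hgen2 _ (le_trans hcs2 hMp)
    rw [hentry]
    calc (M *ᵥ p) ⬝ᵥ (D *ᵥ p) * lam i ≤ |(M *ᵥ p) ⬝ᵥ (D *ᵥ p) * lam i| := le_abs_self _
      _ = |(M *ᵥ p) ⬝ᵥ (D *ᵥ p)| * |lam i| := abs_mul _ _
      _ ≤ 1 * |lam i| := by
          exact mul_le_mul_of_nonneg_right habs (abs_nonneg _)
      _ = |lam i| := one_mul _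
  calc frobSq (M * Matrix.diagonal d) = innerM M A := step1
    _ = ∑ i, (Pᵀ * (Mᵀ * D) * P) i i * lam i := h5
    _ ≤ ∑ i, |lam i| := Finset.sum_le_sum fun i _ => hbound i
    _ ≤ Matrix.trace B := h4 ▸ h3
    _ = innerM D A := hDA.symm
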